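/- arXiv:2104.14476 — 3 statements merged into one kernel-verified Lean document; each statement's English description precedes it below -/
import Mathlib

section
/- Let P be a finite set of points in ℝ², let s, t ∈ P with s ≠ t, and let λ ≥ 0. Suppose there exists some r > 0 such that s and t are connected in G_r(P) with weighted shortest-path distance d_r(s,t) ≤ λ. Then the set F = { r > 0 : s and t are connected in G_r(P) and d_r(s,t) ≤ λ } has a least element r*, and r* equals the Euclidean distance ‖p − q‖₂ of two distinct points p, q ∈ P. -/
noncomputable def unitDiskGraph (P : Finset (EuclideanSpace ℝ (Fin 2))) (r : ℝ) :
    SimpleGraph {p // p ∈ P} where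
  Adj p q := p ≠ q ∧ dist (p : EuclideanSpace ℝ (Fin 2)) (q : EuclideanSpace ℝ (Fin 2)) ≤ r
  symm := by
    constructor
    intro p q h
    exact ⟨h.1.symm, by rw [dist_comm]; exact h.2⟩
  loopless := by
    constructor
    intro p h
    exact h.1 rfl

noncomputable def walkWeight {V : Type*} [PseudoMetricSpace V] {G : SimpleGraph V}
    {u v : V} (w : G.Walk u v) : ℝ :=
  (w.edges.map (Sym2.lift ⟨fun a b => dist a b, fun a b => dist_comm a b⟩)).sum

noncomputable def wdist {V : Type*} [PseudoMetricSpace V] (G : SimpleGraph V) (u v : V) : ℝ :=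
  sInf {x : ℝ | ∃ w : G.Walk u v, walkWeight w = x}

section aux
variable {V : Type*} [PseudoMetricSpace V]

noncomputable def edgeLen : Sym2 V → ℝ :=
  Sym2.lift ⟨fun a b => dist a b, fun a b => dist_comm a b⟩

lemma edgeLen_nonneg (e : Sym2 V) : 0 ≤ edgeLen e := by
  induction e using Sym2.ind with
  | _ a b => exact dist_nonneg

lemma walkWeight_eq {G : SimpleGraph V} {u v : V} (w : G.Walk u v) :
    walkWeight w = (w.edges.map edgeLen).sum := rfl

lemma walkWeight_nonneg {G : SimpleGraph V} {u v : V} (w : G.Walk u v) :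
    0 ≤ walkWeight w := by
  rw [walkWeight_eq]
  apply List.sum_nonneg
  intro x hx
  obtain ⟨e, _, rfl⟩ := List.mem_map.1 hx
  exact edgeLen_nonneg e

lemma walkWeight_bypass_le [DecidableEq V] {G : SimpleGraph V} {u v : V} (w : G.Walk u v) :
    walkWeight w.bypass ≤ walkWeight w := by
  rw [walkWeight_eq, walkWeight_eq]
  have hsub : List.Subperm w.bypass.edges w.edges :=
    List.subperm_of_subset (w.bypass_isPath.isTrail.edges_nodup) (w.edges_bypass_subset)
  obtain ⟨l0, hperm0, hsl0⟩ := hsub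
  have hperm : (l0.map edgeLen).Perm (w.bypass.edges.map edgeLen) := hperm0.map edgeLen
  have hsl : (l0.map edgeLen).Sublist (w.edges.map edgeLen) := hsl0.map edgeLen
  set l := l0.map edgeLen
  calc (w.bypass.edges.map edgeLen).sum = l.sum := (hperm.sum_eq).symm
    _ ≤ (w.edges.map edgeLen).sum := by
        apply List.Sublist.sum_le_sum hsl
        intro a ha
        obtain ⟨e, _, rfl⟩ := List.mem_map.1 ha
        exact edgeLen_nonneg e

lemma exists_min_walk [Fintype V] (G : SimpleGraph V) (u v : V)
    (h : G.Reachable u v) :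
    ∃ w : G.Walk u v, walkWeight w = wdist G u v ∧
      ∀ w' : G.Walk u v, walkWeight w ≤ walkWeight w' := by
  classical
  have hpne : Nonempty (G.Path u v) := by
    obtain ⟨w⟩ := h
    exact ⟨⟨w.bypass, w.bypass_isPath⟩⟩
  set T : Finset ℝ := Finset.image (fun p : G.Path u v => walkWeight p.val) Finset.univ with hT
  have hTne : T.Nonempty := ⟨_, Finset.mem_image.2 ⟨hpne.some, Finset.mem_univ _, rfl⟩⟩
  obtain ⟨p₀, _, hp₀⟩ := Finset.mem_image.1 (T.min'_mem hTne)
  have hlb : ∀ w' : G.Walk u v, walkWeight p₀.val ≤ walkWeight w' := by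
    intro w'
    have : walkWeight w'.bypass ∈ T :=
      Finset.mem_image.2 ⟨⟨w'.bypass, w'.bypass_isPath⟩, Finset.mem_univ _, rfl⟩
    calc walkWeight p₀.val = T.min' hTne := hp₀
      _ ≤ walkWeight w'.bypass := T.min'_le _ this
      _ ≤ walkWeight w' := walkWeight_bypass_le w'
  refine ⟨p₀.val, le_antisymm ?_ ?_, hlb⟩
  · exact le_csInf ⟨_, p₀.val, rfl⟩ (by rintro x ⟨w', rfl⟩; exact hlb w')
  · exact csInf_le ⟨0, by rintro x ⟨w', rfl⟩; exact walkWeight_nonneg w'⟩ ⟨p₀.val, rfl⟩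

lemma wdist_le {G : SimpleGraph V} {u v : V} (w : G.Walk u v) :
    wdist G u v ≤ walkWeight w :=
  csInf_le ⟨0, by rintro x ⟨w', rfl⟩; exact walkWeight_nonneg w'⟩ ⟨w, rfl⟩

end aux

theorem stmt4 (P : Finset (EuclideanSpace ℝ (Fin 2)))
    (s t : EuclideanSpace ℝ (Fin 2)) (hs : s ∈ P) (ht : t ∈ P) (hst : s ≠ t)
    (lam : ℝ) (hlam : 0 ≤ lam)
    (hex : ∃ r : ℝ, 0 < r ∧ (unitDiskGraph P r).Reachable ⟨s, hs⟩ ⟨t, ht⟩ ∧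
      wdist (unitDiskGraph P r) ⟨s, hs⟩ ⟨t, ht⟩ ≤ lam) :
    ∃ rstar : ℝ,
      IsLeast {r : ℝ | 0 < r ∧ (unitDiskGraph P r).Reachable ⟨s, hs⟩ ⟨t, ht⟩ ∧
        wdist (unitDiskGraph P r) ⟨s, hs⟩ ⟨t, ht⟩ ≤ lam} rstar ∧
      ∃ p ∈ P, ∃ q ∈ P, p ≠ q ∧ rstar = dist p q := by
  classical
  set F : Set ℝ := {r : ℝ | 0 < r ∧ (unitDiskGraph P r).Reachable ⟨s, hs⟩ ⟨t, ht⟩ ∧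
        wdist (unitDiskGraph P r) ⟨s, hs⟩ ⟨t, ht⟩ ≤ lam} with hF
  set D : Finset ℝ := Finset.image (fun pq => dist pq.1 pq.2)
      ((P ×ˢ P).filter (fun pq => pq.1 ≠ pq.2)) with hD
  have key : ∀ r ∈ F, ∃ d ∈ D, d ∈ F ∧ d ≤ r := by
    rintro r ⟨hr, hreach, hwd⟩
    obtain ⟨w, hwmin, _⟩ := exists_min_walk (unitDiskGraph P r) ⟨s, hs⟩ ⟨t, ht⟩ hreach
    have hwlam : walkWeight w ≤ lam := hwmin ▸ hwd
    have hene : w.edges ≠ [] := by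
      intro hnil
      have h0 : w.length = 0 := by
        have := w.length_edges
        rw [hnil] at this
        simpa using this.symm
      exact hst (Subtype.ext_iff.1 (SimpleGraph.Walk.eq_of_length_eq_zero h0))
    set L : List ℝ := w.edges.map edgeLen with hL
    have hTne : L.toFinset.Nonempty := by
      obtain ⟨e, he⟩ := List.exists_mem_of_ne_nil w.edges hene
      exact ⟨edgeLen e, List.mem_toFinset.2 (List.mem_map.2 ⟨e, he, rfl⟩)⟩
    set d := L.toFinset.max' hTne with hd
    obtain ⟨e, hew, hfe⟩ : ∃ e ∈ w.edges, edgeLen e = d := by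
      exact List.mem_map.1 (List.mem_toFinset.1 (L.toFinset.max'_mem hTne))
    have hedge_le : ∀ e' ∈ w.edges, edgeLen e' ≤ d := by
      intro e' he'
      exact L.toFinset.le_max' _ (List.mem_toFinset.2 (List.mem_map.2 ⟨e', he', rfl⟩))
    -- properties of edges of w
    have hadj : ∀ e' ∈ w.edges, e' ∈ (unitDiskGraph P r).edgeSet := fun e' he' =>
      w.edges_subset_edgeSet he'
    -- d ∈ D, d > 0
    induction e using Sym2.ind with
    | _ a b =>
      have hab : (unitDiskGraph P r).Adj a b := hadj _ hew
      have habne : (a : EuclideanSpace ℝ (Fin 2)) ≠ (b : EuclideanSpace ℝ (Fin 2)) := by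
        intro hcontra
        exact hab.1 (Subtype.ext hcontra)
      have hdist : edgeLen s(a, b) = dist (a : EuclideanSpace ℝ (Fin 2)) b := by
        simp [edgeLen, Subtype.dist_eq]
      have hdD : d ∈ D := by
        rw [hD]
        refine Finset.mem_image.2 ⟨((a : EuclideanSpace ℝ (Fin 2)), (b : EuclideanSpace ℝ (Fin 2))), ?_, ?_⟩
        · exact Finset.mem_filter.2 ⟨Finset.mem_product.2 ⟨a.2, b.2⟩, habne⟩
        · rw [← hfe, hdist]
      have hdpos : 0 < d := by
        rw [← hfe, hdist]
        exact dist_pos.2 habne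
      -- transfer w to unitDiskGraph P d
      have htrans : ∀ e' ∈ w.edges, e' ∈ (unitDiskGraph P d).edgeSet := by
        intro e' he'
        induction e' using Sym2.ind with
        | _ x y =>
          have hxy : (unitDiskGraph P r).Adj x y := hadj _ he'
          refine ⟨hxy.1, ?_⟩
          have := hedge_le _ he'
          rw [show edgeLen s(x, y) = dist (x : EuclideanSpace ℝ (Fin 2)) y by
            simp [edgeLen, Subtype.dist_eq]] at this
          exact this
      set wt := w.transfer (unitDiskGraph P d) htrans with hwt
      have hwtw : walkWeight wt = walkWeight w := by
        rw [walkWeight_eq, walkWeight_eq, hwt, SimpleGraph.Walk.edges_transfer]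
      have hdF : d ∈ F := by
        refine ⟨hdpos, ⟨wt⟩, ?_⟩
        calc wdist (unitDiskGraph P d) ⟨s, hs⟩ ⟨t, ht⟩ ≤ walkWeight wt := wdist_le wt
          _ = walkWeight w := hwtw
          _ ≤ lam := hwlam
      have hdr : d ≤ r := by
        rw [← hfe, hdist]
        exact hab.2
      exact ⟨d, hdD, hdF, hdr⟩
  -- now take minimum of D ∩ F
  obtain ⟨r₀, hr₀F⟩ := hex
  have hr₀F' : r₀ ∈ F := ⟨hr₀F.1, hr₀F.2.1, hr₀F.2.2⟩
  set E : Finset ℝ := D.filter (fun d => d ∈ F) with hE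
  have hEne : E.Nonempty := by
    obtain ⟨d, hdD, hdF, _⟩ := key r₀ hr₀F'
    exact ⟨d, Finset.mem_filter.2 ⟨hdD, hdF⟩⟩
  refine ⟨E.min' hEne, ⟨(Finset.mem_filter.1 (E.min'_mem hEne)).2, ?_⟩, ?_⟩
  · intro r hrF
    obtain ⟨d, hdD, hdF, hdr⟩ := key r hrF
    exact le_trans (E.min'_le d (Finset.mem_filter.2 ⟨hdD, hdF⟩)) hdr
  · have hmD : E.min' hEne ∈ D := (Finset.mem_filter.1 (E.min'_mem hEne)).1
    rw [hD] at hmD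
    obtain ⟨⟨p, q⟩, hpq, heq⟩ := Finset.mem_image.1 hmD
    obtain ⟨hprod, hne⟩ := Finset.mem_filter.1 hpq
    obtain ⟨hp, hq⟩ := Finset.mem_product.1 hprod
    exact ⟨p, hp, q, hq, hne, heq.symm⟩
end

section
/- Let P be a finite set of points in ℝ², let s, t ∈ P with s ≠ t, and let λ ≥ 0. Suppose there exists some r > 0 such that s and t are connected in the L1 unit-disk graph G_r(P) with weighted shortest-path distance d_r(s,t) ≤ λ. Then the set F = { r > 0 : s and t are connected in G_r(P) and d_r(s,t) ≤ λ } has a least element r*, and r* equals the L1 distance ‖p − q‖₁ of two distinct points p, q ∈ P. -/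
/-- The L1 distance between two points of the plane. -/
def l1dist (p q : ℝ × ℝ) : ℝ := |p.1 - q.1| + |p.2 - q.2|

theorem l1dist_comm (p q : ℝ × ℝ) : l1dist p q = l1dist q p := by
  unfold l1dist
  rw [abs_sub_comm p.1 q.1, abs_sub_comm p.2 q.2]

/-- The L1 unit-disk graph of a finite point set `P ⊆ ℝ²` with parameter `r`:
two distinct points are adjacent iff their L1 distance is at most `r`. -/
noncomputable def l1UnitDiskGraph (P : Finset (ℝ × ℝ)) (r : ℝ) :
    SimpleGraph {p // p ∈ P} where
  Adj p q := p ≠ q ∧ l1dist (p : ℝ × ℝ) (q : ℝ × ℝ) ≤ r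
  symm := by
    constructor
    intro p q h
    exact ⟨h.1.symm, by rw [l1dist_comm]; exact h.2⟩
  loopless := by
    constructor
    intro p h
    exact h.1 rfl

/-- The total L1 weight of a walk in the L1 unit-disk graph:
the sum of the L1 distances between the endpoints of its edges. -/
noncomputable def l1WalkWeight {P : Finset (ℝ × ℝ)} {r : ℝ}
    {u v : {p // p ∈ P}} (w : (l1UnitDiskGraph P r).Walk u v) : ℝ :=
  (w.edges.map (Sym2.lift ⟨fun (a b : {p // p ∈ P}) => l1dist a.1 b.1,
    fun a b => l1dist_comm a.1 b.1⟩)).sum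

/-- The weighted shortest-path distance in the L1 unit-disk graph: the minimum
total L1 weight of a walk joining two vertices. -/
noncomputable def l1wdist (P : Finset (ℝ × ℝ)) (r : ℝ) (u v : {p // p ∈ P}) : ℝ :=
  sInf {x : ℝ | ∃ w : (l1UnitDiskGraph P r).Walk u v, l1WalkWeight w = x}

lemma l1dist_pos {p q : ℝ × ℝ} (h : p ≠ q) : 0 < l1dist p q := by
  rcases (abs_nonneg (p.1 - q.1)).lt_or_eq with h1 | h1
  · exact add_pos_of_pos_of_nonneg h1 (abs_nonneg _)
  rcases (abs_nonneg (p.2 - q.2)).lt_or_eq with h2 | h2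
  · exact add_pos_of_nonneg_of_pos (abs_nonneg _) h2
  exfalso
  apply h
  have e1 : p.1 = q.1 := by have := abs_eq_zero.mp h1.symm; linarith
  have e2 : p.2 = q.2 := by have := abs_eq_zero.mp h2.symm; linarith
  exact Prod.ext e1 e2

lemma l1wdist_congr {P : Finset (ℝ × ℝ)} {r r' : ℝ}
    (h : l1UnitDiskGraph P r = l1UnitDiskGraph P r') :
    l1wdist P r = l1wdist P r' := by
  unfold l1wdist l1WalkWeight
  funext u v
  rw [h]

theorem stmt5 (P : Finset (ℝ × ℝ))
    (s t : ℝ × ℝ) (hs : s ∈ P) (ht : t ∈ P) (hst : s ≠ t)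
    (lam : ℝ) (hlam : 0 ≤ lam)
    (hex : ∃ r : ℝ, 0 < r ∧ (l1UnitDiskGraph P r).Reachable ⟨s, hs⟩ ⟨t, ht⟩ ∧
      l1wdist P r ⟨s, hs⟩ ⟨t, ht⟩ ≤ lam) :
    ∃ rstar : ℝ,
      IsLeast {r : ℝ | 0 < r ∧ (l1UnitDiskGraph P r).Reachable ⟨s, hs⟩ ⟨t, ht⟩ ∧
        l1wdist P r ⟨s, hs⟩ ⟨t, ht⟩ ≤ lam} rstar ∧
      ∃ p ∈ P, ∃ q ∈ P, p ≠ q ∧ rstar = l1dist p q := by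
  classical
  set F : Set ℝ := {r : ℝ | 0 < r ∧ (l1UnitDiskGraph P r).Reachable ⟨s, hs⟩ ⟨t, ht⟩ ∧
        l1wdist P r ⟨s, hs⟩ ⟨t, ht⟩ ≤ lam} with hF
  set S : Set ℝ := {d : ℝ | ∃ p ∈ P, ∃ q ∈ P, p ≠ q ∧ d = l1dist p q} with hSdef
  have hSfin : S.Finite := by
    have : S ⊆ (fun pq : (ℝ × ℝ) × (ℝ × ℝ) => l1dist pq.1 pq.2) '' ((P : Set (ℝ × ℝ)) ×ˢ (P : Set (ℝ × ℝ))) := by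
      rintro d ⟨p, hp, q, hq, _, rfl⟩
      exact ⟨(p, q), ⟨hp, hq⟩, rfl⟩
    exact Set.Finite.subset (((P.finite_toSet).prod (P.finite_toSet)).image _) this
  have hSpos : ∀ d ∈ S, 0 < d := by
    rintro d ⟨p, _, q, _, hne, rfl⟩
    exact l1dist_pos hne
  -- key step
  have key : ∀ r ∈ F, ∃ r₀, r₀ ∈ F ∩ S ∧ r₀ ≤ r := by
    rintro r ⟨hrpos, hreach, hwd⟩
    set T : Set ℝ := S ∩ Set.Iic r with hTdef
    have hTfin : T.Finite := hSfin.inter_of_left _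
    have hTne : T.Nonempty := by
      obtain ⟨w⟩ := hreach
      have hnil : ¬ w.Nil :=
        SimpleGraph.Walk.not_nil_of_ne (fun h => hst (congrArg Subtype.val h))
      have hadj := w.adj_snd hnil
      set x := w.getVert 1
      refine ⟨l1dist s x.1, ⟨s, hs, x.1, x.2, ?_, rfl⟩, hadj.2⟩
      exact fun he => hadj.1 (Subtype.ext he)
    set r₀ : ℝ := sSup T with hr0
    have hr0T : r₀ ∈ T := hTne.csSup_mem hTfin
    have hr0le : r₀ ≤ r := hr0T.2
    have hGeq : l1UnitDiskGraph P r = l1UnitDiskGraph P r₀ := by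
      apply SimpleGraph.ext
      funext p q
      show (p ≠ q ∧ l1dist p.1 q.1 ≤ r) = (p ≠ q ∧ l1dist p.1 q.1 ≤ r₀)
      apply propext
      constructor
      · rintro ⟨hne, hd⟩
        refine ⟨hne, le_csSup hTfin.bddAbove ?_⟩
        exact ⟨⟨p.1, p.2, q.1, q.2, fun he => hne (Subtype.ext he), rfl⟩, hd⟩
      · rintro ⟨hne, hd⟩
        exact ⟨hne, hd.trans hr0le⟩
    refine ⟨r₀, ⟨⟨hSpos _ hr0T.1, ?_, ?_⟩, hr0T.1⟩, hr0le⟩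
    · rw [← hGeq]; exact hreach
    · rw [← l1wdist_congr hGeq]; exact hwd
  obtain ⟨r, hrF⟩ := hex
  obtain ⟨r₀, hr₀, _⟩ := key r hrF
  have hFS_ne : (F ∩ S).Nonempty := ⟨r₀, hr₀⟩
  have hFS_fin : (F ∩ S).Finite := hSfin.inter_of_right _
  set rstar := sInf (F ∩ S) with hrs
  have hmem : rstar ∈ F ∩ S := hFS_ne.csInf_mem hFS_fin
  refine ⟨rstar, ⟨hmem.1, ?_⟩, ?_⟩
  · intro x hx
    obtain ⟨x₀, hx₀, hle⟩ := key x hx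
    exact (csInf_le hFS_fin.bddBelow hx₀).trans hle
  · obtain ⟨p, hp, q, hq, hne, he⟩ := hmem.2
    exact ⟨p, hp, q, hq, hne, he⟩
end

section
/- Let p, q ∈ ℝ² be distinct points whose y-coordinates are both strictly less than a real c, and let r > 0. If z₁ and z₂ are two distinct points with ‖z₁ − p‖₂ = ‖z₁ − q‖₂ = r and ‖z₂ − p‖₂ = ‖z₂ − q‖₂ = r, then z₁ + z₂ = p + q. Consequently, at most one point z satisfies ‖z − p‖₂ = ‖z − q‖₂ = r and y(z) > c; that is, the two circles of radius r centered at p and q intersect in at most one point strictly above the horizontal line y = c. -/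
lemma key_alg (p0 p1 q0 q1 x0 x1 y0 y1 : ℝ)
    (hpq : ¬ (p0 = q0 ∧ p1 = q1)) (hz : ¬ (x0 = y0 ∧ x1 = y1))
    (e1 : (x0 - p0)^2 + (x1 - p1)^2 = (x0 - q0)^2 + (x1 - q1)^2)
    (e2 : (x0 - p0)^2 + (x1 - p1)^2 = (y0 - p0)^2 + (y1 - p1)^2)
    (e3 : (x0 - p0)^2 + (x1 - p1)^2 = (y0 - q0)^2 + (y1 - q1)^2) :
    x0 + y0 = p0 + q0 ∧ x1 + y1 = p1 + q1 := by
  have huv : (x0-y0)*(q0-p0) + (x1-y1)*(q1-p1) = 0 := by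
    linear_combination (e1 + e2 - e3) / 2
  have hwv : (x0+y0-p0-q0)*(q0-p0) + (x1+y1-p1-q1)*(q1-p1) = 0 := by
    linear_combination (e1 - e2 + e3) / 2
  have hwu : (x0+y0-p0-q0)*(x0-y0) + (x1+y1-p1-q1)*(x1-y1) = 0 := by
    linear_combination (-e1 + e2 + e3) / 2
  have hu : (x0-y0)^2 + (x1-y1)^2 > 0 := by
    rcases not_and_or.mp hz with h | h <;>
      [nlinarith [sq_nonneg (x1-y1), sq_pos_of_ne_zero (sub_ne_zero.mpr h)];
       nlinarith [sq_nonneg (x0-y0), sq_pos_of_ne_zero (sub_ne_zero.mpr h)]]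
  have hv : (q0-p0)^2 + (q1-p1)^2 > 0 := by
    rcases not_and_or.mp hpq with h | h <;>
      [nlinarith [sq_nonneg (q1-p1), sq_pos_of_ne_zero (sub_ne_zero.mpr (Ne.symm h))];
       nlinarith [sq_nonneg (q0-p0), sq_pos_of_ne_zero (sub_ne_zero.mpr (Ne.symm h))]]
  have hdet2 : ((x0-y0)*(q1-p1) - (x1-y1)*(q0-p0))^2
      = ((x0-y0)^2 + (x1-y1)^2) * ((q0-p0)^2 + (q1-p1)^2) := by
    linear_combination (-(x0-y0)*(q0-p0) - (x1-y1)*(q1-p1)) * huv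
  have hdet : (x0-y0)*(q1-p1) - (x1-y1)*(q0-p0) ≠ 0 := by
    intro h
    rw [h] at hdet2
    nlinarith
  constructor
  · have h0 : (x0+y0-p0-q0) * ((x0-y0)*(q1-p1) - (x1-y1)*(q0-p0)) = 0 := by
      linear_combination (q1-p1) * hwu - (x1-y1) * hwv
    rcases mul_eq_zero.mp h0 with h | h
    · linarith
    · exact absurd h hdet
  · have h1 : (x1+y1-p1-q1) * ((x0-y0)*(q1-p1) - (x1-y1)*(q0-p0)) = 0 := by
      linear_combination (x0-y0) * hwv - (q0-p0) * hwu
    rcases mul_eq_zero.mp h1 with h | h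
    · linarith
    · exact absurd h hdet

theorem stmt10 (c : ℝ) (p q : EuclideanSpace ℝ (Fin 2)) (hpq : p ≠ q)
    (hp : p 1 < c) (hq : q 1 < c) (r : ℝ) (hr : 0 < r) :
    (∀ z₁ z₂ : EuclideanSpace ℝ (Fin 2), z₁ ≠ z₂ →
      dist z₁ p = r → dist z₁ q = r → dist z₂ p = r → dist z₂ q = r →
      z₁ + z₂ = p + q) ∧
    (∀ z₁ z₂ : EuclideanSpace ℝ (Fin 2),
      dist z₁ p = r → dist z₁ q = r → c < z₁ 1 →
      dist z₂ p = r → dist z₂ q = r → c < z₂ 1 →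
      z₁ = z₂) := by
  have dist_sq : ∀ a b : EuclideanSpace ℝ (Fin 2),
      dist a b ^ 2 = (a 0 - b 0)^2 + (a 1 - b 1)^2 := by
    intro a b
    rw [EuclideanSpace.dist_eq, Real.sq_sqrt (by positivity)]
    simp [Fin.sum_univ_two, Real.dist_eq, sq_abs]
  have main : ∀ z₁ z₂ : EuclideanSpace ℝ (Fin 2), z₁ ≠ z₂ →
      dist z₁ p = r → dist z₁ q = r → dist z₂ p = r → dist z₂ q = r →
      z₁ + z₂ = p + q := by
    intro z₁ z₂ hz h1 h2 h3 h4
    have e1 : (z₁ 0 - p 0)^2 + (z₁ 1 - p 1)^2 = (z₁ 0 - q 0)^2 + (z₁ 1 - q 1)^2 := by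
      rw [← dist_sq, ← dist_sq, h1, h2]
    have e2 : (z₁ 0 - p 0)^2 + (z₁ 1 - p 1)^2 = (z₂ 0 - p 0)^2 + (z₂ 1 - p 1)^2 := by
      rw [← dist_sq, ← dist_sq, h1, h3]
    have e3 : (z₁ 0 - p 0)^2 + (z₁ 1 - p 1)^2 = (z₂ 0 - q 0)^2 + (z₂ 1 - q 1)^2 := by
      rw [← dist_sq, ← dist_sq, h1, h4]
    have hpq' : ¬ (p 0 = q 0 ∧ p 1 = q 1) := by
      rintro ⟨a, b⟩
      exact hpq (by ext i; fin_cases i <;> assumption)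
    have hz' : ¬ (z₁ 0 = z₂ 0 ∧ z₁ 1 = z₂ 1) := by
      rintro ⟨a, b⟩
      exact hz (by ext i; fin_cases i <;> assumption)
    obtain ⟨g0, g1⟩ := key_alg (p 0) (p 1) (q 0) (q 1) (z₁ 0) (z₁ 1) (z₂ 0) (z₂ 1)
      hpq' hz' e1 e2 e3
    ext i
    fin_cases i <;> simp [PiLp.add_apply] <;> linarith
  refine ⟨main, ?_⟩
  intro z₁ z₂ h1 h2 hc1 h3 h4 hc2
  by_contra hne
  have := main z₁ z₂ hne h1 h2 h3 h4
  have h1' : z₁ 1 + z₂ 1 = p 1 + q 1 := by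
    have := congrArg (fun v : EuclideanSpace ℝ (Fin 2) => v 1) this
    simpa [PiLp.add_apply] using this
  linarith
end
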